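/- Let G be a finite simple undirected graph with n vertices and k ≥ 1 an integer, and let Ĝ be a spanning subgraph of G (same vertex set V, edge set a subset of that of G). Write dom, ext for the k-hop domination quantities in G and dom̂, ext̂ for those in Ĝ. Let 1 ≤ p < n, let (A_i) be a greedy sequence for dom in G and (Â_i) a greedy sequence for dom̂ in Ĝ. Then: (i) ext(A) ≥ ext̂(A) for every A ⊆ V; and (ii) if ext̂(Â_p) > 0 then, with θ̂_p = ext̂(Â_p)/p and σ̂_p = ext̂(Â_p)/(n − p), for every B ⊆ V with |B| = p, max{ext(A_p), ext(Â_p)} ≥ max{ext(A_p), ext̂(Â_p)} ≥ max{θ̂_p(e − 1)/(1 + θ̂_p e), σ̂_p} · ext(B). -/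
import Mathlib


open Finset
open scoped Classical

/-- The closed `k`-neighborhood of `v`: all vertices at graph distance at most `k`
from `v` (in particular `v` itself). -/
noncomputable def kNbhd {V : Type*} [Fintype V] (G : SimpleGraph V) (k : ℕ) (v : V) :
    Finset V :=
  Finset.univ.filter (fun u => G.Reachable u v ∧ G.dist u v ≤ k)

/-- `domk G k A` is the number of vertices `k`-hop dominated by `A`. -/
noncomputable def domk {V : Type*} [Fintype V] (G : SimpleGraph V) (k : ℕ) (A : Finset V) :
    ℕ :=
  (A.biUnion (kNbhd G k)).card

/-- `extk G k A` is the number of vertices externally `k`-hop dominated by `A`. -/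
noncomputable def extk {V : Type*} [Fintype V] (G : SimpleGraph V) (k : ℕ) (A : Finset V) :
    ℤ :=
  (domk G k A : ℤ) - (A.card : ℤ)

/-- A greedy sequence for `domk G k` (with `N` greedy steps): `A 0 = ∅` and each
`A (i+1)` is obtained from `A i` by inserting a new vertex maximizing `domk`. -/
def IsGreedySeq {V : Type*} [Fintype V] (G : SimpleGraph V) (k : ℕ) (N : ℕ)
    (A : ℕ → Finset V) : Prop :=
  A 0 = ∅ ∧ ∀ i < N, ∃ v ∉ A i, A (i + 1) = insert v (A i) ∧
    ∀ u ∉ A i, domk G k (insert u (A i)) ≤ domk G k (insert v (A i))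

section Aux
variable {V : Type*} [Fintype V]

lemma kNbhd_mono (G G' : SimpleGraph V) (h : G' ≤ G) (k : ℕ) (v : V) :
    kNbhd G' k v ⊆ kNbhd G k v := by
  intro u hu
  simp only [kNbhd, mem_filter, mem_univ, true_and] at hu ⊢
  obtain ⟨hr, hd⟩ := hu
  refine ⟨hr.mono h, ?_⟩
  obtain ⟨w, hw⟩ := hr.exists_walk_length_eq_dist
  calc G.dist u v ≤ (w.mapLe h).length := SimpleGraph.dist_le _
    _ = w.length := by simp
    _ ≤ k := hw ▸ hd

lemma self_mem_kNbhd (G : SimpleGraph V) (k : ℕ) (v : V) : v ∈ kNbhd G k v := by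
  refine Finset.mem_filter.mpr ⟨Finset.mem_univ v, SimpleGraph.Reachable.refl v, ?_⟩
  simp [SimpleGraph.dist_self]

lemma subset_biUnion_kNbhd (G : SimpleGraph V) (k : ℕ) (A : Finset V) :
    A ⊆ A.biUnion (kNbhd G k) := fun v hv =>
  Finset.mem_biUnion.mpr ⟨v, hv, self_mem_kNbhd G k v⟩

lemma domk_mono (G : SimpleGraph V) (k : ℕ) {A B : Finset V} (h : A ⊆ B) :
    domk G k A ≤ domk G k B :=
  Finset.card_le_card (Finset.biUnion_subset_biUnion_of_subset_left _ h)

lemma card_le_domk (G : SimpleGraph V) (k : ℕ) (A : Finset V) :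
    A.card ≤ domk G k A :=
  Finset.card_le_card (subset_biUnion_kNbhd G k A)

lemma domk_le_card_univ (G : SimpleGraph V) (k : ℕ) (A : Finset V) :
    domk G k A ≤ Fintype.card V :=
  Finset.card_le_univ _

lemma domk_graph_mono (G G' : SimpleGraph V) (h : G' ≤ G) (k : ℕ) (A : Finset V) :
    domk G' k A ≤ domk G k A := by
  refine Finset.card_le_card (Finset.biUnion_subset.mpr fun v hv => ?_)
  exact (kNbhd_mono G G' h k v).trans (Finset.subset_biUnion_of_mem _ hv)

lemma domk_insert (G : SimpleGraph V) (k : ℕ) (A : Finset V) (v : V) :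
    domk G k (insert v A) = domk G k A + (kNbhd G k v \ A.biUnion (kNbhd G k)).card := by
  have : (insert v A).biUnion (kNbhd G k) = kNbhd G k v ∪ A.biUnion (kNbhd G k) :=
    Finset.biUnion_insert ..
  rw [domk, this, domk, add_comm]
  rw [← Finset.card_sdiff_add_card]

/-- there is a vertex of `B` whose gain is at least average. -/
lemma exists_good_vertex (G : SimpleGraph V) (k : ℕ) (A B : Finset V) (hB : B.Nonempty) :
    ∃ v ∈ B, (domk G k B : ℤ) - domk G k A ≤
      (B.card : ℤ) * ((domk G k (insert v A) : ℤ) - domk G k A) := by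
  set S := A.biUnion (kNbhd G k) with hS
  set T := B.biUnion (kNbhd G k) with hT
  have hsum : T.card ≤ S.card + ∑ v ∈ B, (kNbhd G k v \ S).card := by
    have h1 : T ⊆ S ∪ B.biUnion (fun v => kNbhd G k v \ S) := by
      intro x hx
      rcases Finset.mem_biUnion.mp hx with ⟨v, hv, hxv⟩
      by_cases hxS : x ∈ S
      · exact Finset.mem_union_left _ hxS
      · exact Finset.mem_union_right _ (Finset.mem_biUnion.mpr ⟨v, hv, Finset.mem_sdiff.mpr ⟨hxv, hxS⟩⟩)
    calc T.card ≤ (S ∪ B.biUnion (fun v => kNbhd G k v \ S)).card := Finset.card_le_card h1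
      _ ≤ S.card + (B.biUnion (fun v => kNbhd G k v \ S)).card := Finset.card_union_le _ _
      _ ≤ S.card + ∑ v ∈ B, (kNbhd G k v \ S).card :=
          Nat.add_le_add_left (Finset.card_biUnion_le) _
  have hex : ∃ v ∈ B, ∑ u ∈ B, (kNbhd G k u \ S).card ≤ B.card * (kNbhd G k v \ S).card := by
    apply Finset.exists_le_of_sum_le hB
    rw [Finset.sum_const, smul_eq_mul, ← Finset.mul_sum]
  obtain ⟨v, hvB, hv⟩ := hex
  refine ⟨v, hvB, ?_⟩
  have hins := domk_insert G k A v
  have : (domk G k (insert v A) : ℤ) - domk G k A = ((kNbhd G k v \ S).card : ℤ) := by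
    rw [hins]; push_cast; ring
  rw [this]
  have : (T.card : ℤ) ≤ S.card + B.card * (kNbhd G k v \ S).card := by
    exact_mod_cast hsum.trans (Nat.add_le_add_left hv _)
  simpa [domk, ← hS, ← hT] using by linarith

lemma greedy_card {G : SimpleGraph V} {k N : ℕ} {A : ℕ → Finset V}
    (hA : IsGreedySeq G k N A) : ∀ i ≤ N, (A i).card = i := by
  intro i hi
  induction i with
  | zero => simp [hA.1]
  | succ n ih =>
    obtain ⟨v, hv, heq, _⟩ := hA.2 n (by omega)
    rw [heq, Finset.card_insert_of_notMem hv, ih (by omega)]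

lemma greedy_main (G : SimpleGraph V) (k p : ℕ) (hp : 1 ≤ p) (A : ℕ → Finset V)
    (hA : IsGreedySeq G k p A) (B : Finset V) (hB : B.card = p) :
    ∀ i ≤ p, (domk G k B : ℝ) - domk G k (A i) ≤ (1 - 1/(p:ℝ))^i * domk G k B := by
  have hp0 : (0:ℝ) < p := by exact_mod_cast hp
  have hfac : (0:ℝ) ≤ 1 - 1/(p:ℝ) := by
    rw [sub_nonneg, div_le_one hp0]; exact_mod_cast hp
  intro i hi
  induction i with
  | zero =>
    have : A 0 = ∅ := hA.1
    simp [this, domk, pow_zero]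
  | succ n ih =>
    have hn : n < p := by omega
    have ihn := ih (by omega)
    obtain ⟨v, hv, heq, hmax⟩ := hA.2 n hn
    have hBne : B.Nonempty := Finset.card_pos.mp (by omega)
    obtain ⟨w, hwB, hw⟩ := exists_good_vertex G k (A n) B hBne
    have hstep : (domk G k B : ℤ) - domk G k (A n) ≤
        (p:ℤ) * ((domk G k (A (n+1)) : ℤ) - domk G k (A n)) := by
      have h2 : domk G k (insert w (A n)) ≤ domk G k (A (n+1)) := by
        rw [heq]
        by_cases hwA : w ∈ A n
        · rw [Finset.insert_eq_self.mpr hwA]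
          exact domk_mono G k (Finset.subset_insert _ _)
        · exact hmax w hwA
      rw [hB] at hw
      refine hw.trans ?_
      have : ((domk G k (insert w (A n)) : ℤ) - domk G k (A n)) ≤
          ((domk G k (A (n+1)) : ℤ) - domk G k (A n)) := by
        omega
      exact mul_le_mul_of_nonneg_left this (by positivity)
    -- move to ℝ
    have hstepR : (domk G k B : ℝ) - domk G k (A n) ≤
        (p:ℝ) * ((domk G k (A (n+1)) : ℝ) - domk G k (A n)) := by exact_mod_cast hstep
    have key : (domk G k B : ℝ) - domk G k (A (n+1)) ≤
        ((domk G k B : ℝ) - domk G k (A n)) * (1 - 1/(p:ℝ)) := by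
      have h3 : ((domk G k B : ℝ) - domk G k (A n)) / p ≤
          (domk G k (A (n+1)) : ℝ) - domk G k (A n) := by
        rw [div_le_iff₀ hp0]
        linarith [hstepR]
      have expand : ((domk G k B : ℝ) - domk G k (A n)) * (1 - 1/(p:ℝ)) =
          ((domk G k B : ℝ) - domk G k (A n)) - ((domk G k B : ℝ) - domk G k (A n)) / p := by
        field_simp <;> ring
      rw [expand]; linarith
    calc (domk G k B : ℝ) - domk G k (A (n+1))
        ≤ ((domk G k B : ℝ) - domk G k (A n)) * (1 - 1/(p:ℝ)) := key
      _ ≤ ((1 - 1/(p:ℝ))^n * domk G k B) * (1 - 1/(p:ℝ)) :=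
          mul_le_mul_of_nonneg_right ihn hfac
      _ = (1 - 1/(p:ℝ))^(n+1) * domk G k B := by ring

/-- pure real arithmetic for the final bound -/
lemma final_arith (E e x L P M : ℝ) (hEpos : 0 < E) (he1 : 1 < e) (hxnn : 0 ≤ x)
    (hp0 : 0 < P) (hnp : 0 < M - P) (hxle : x ≤ M - P)
    (hgreedy : (1 - 1/e) * (x + P) - P ≤ L) :
    max ((E / P * (e - 1)) / (1 + E / P * e)) (E / (M - P)) * x ≤ max L E := by
  have hepos : (0:ℝ) < e := by linarith
  have hEe : 0 < E * e := mul_pos hEpos hepos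
  have hDen : (0:ℝ) < 1 + E / P * e := by
    have : 0 < E / P * e := mul_pos (div_pos hEpos hp0) hepos
    linarith
  rw [max_mul_of_nonneg _ _ hxnn]
  have hgreedy2 : (e-1)*(x+P) - e*P ≤ e*L := by
    have h := mul_le_mul_of_nonneg_left hgreedy (le_of_lt hepos)
    have hee : e * ((1 - 1/e) * (x + P) - P) = (e-1)*(x+P) - e*P := by
      field_simp <;> ring
    linarith [hee ▸ h]
  apply max_le
  · by_cases hcase : x * (e - 1) ≤ P + E * e
    · refine le_trans ?_ (le_max_right L E)
      rw [div_mul_eq_mul_div, div_le_iff₀ hDen]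
      have h0 : E / P * (e-1) * x = E * (x * (e-1)) / P := by ring
      rw [h0, div_le_iff₀ hp0]
      have h1 : E * (x * (e-1)) ≤ E * (P + E * e) :=
        mul_le_mul_of_nonneg_left hcase (le_of_lt hEpos)
      have h2 : E * (P + E * e) = E * (1 + E/P*e) * P := by field_simp <;> ring
      linarith [h2 ▸ h1]
    · push_neg at hcase
      refine le_trans ?_ (le_max_left L E)
      rw [div_mul_eq_mul_div, div_le_iff₀ hDen]
      have h0 : E / P * (e-1) * x = E*(e-1)*x/P := by ring
      rw [h0, div_le_iff₀ hp0]
      have h2 : L * (1 + E/P*e) * P = L * (P + E*e) := by field_simp <;> ring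
      rw [h2]
      have hPE : (0:ℝ) < P + E*e := by linarith
      have h4 : ((e-1)*x - P) * (P + E*e) ≤ (e*L) * (P + E*e) := by
        apply mul_le_mul_of_nonneg_right _ (le_of_lt hPE)
        nlinarith [hgreedy2]
      have h5 : 0 ≤ P * ((e-1)*x - P - E*e) := by nlinarith [hcase.le, hp0]
      have key : e * (E*(e-1)*x) ≤ e * (L*(P+E*e)) := by nlinarith [h4, h5]
      exact le_of_mul_le_mul_left key hepos
  · refine le_trans ?_ (le_max_right L E)
    rw [div_mul_eq_mul_div, div_le_iff₀ hnp]
    nlinarith [mul_le_mul_of_nonneg_left hxle (le_of_lt hEpos)]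

end Aux

/-- bounds obtained from a greedy run on a spanning subgraph `G'` of `G`. -/
theorem greedy_ext_subgraph_guarantees {V : Type*} [Fintype V] (G G' : SimpleGraph V)
    (hsub : G' ≤ G) (k : ℕ) (hk : 1 ≤ k) (p : ℕ) (hp1 : 1 ≤ p) (hpn : p < Fintype.card V)
    (A A' : ℕ → Finset V) (hA : IsGreedySeq G k p A) (hA' : IsGreedySeq G' k p A') :
    (∀ C : Finset V, extk G' k C ≤ extk G k C) ∧
    (0 < extk G' k (A' p) →
      ∀ B : Finset V, B.card = p →
        max (((extk G' k (A' p) : ℝ) / p * (Real.exp 1 - 1)) /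
              (1 + (extk G' k (A' p) : ℝ) / p * Real.exp 1))
            ((extk G' k (A' p) : ℝ) / (Fintype.card V - p)) * (extk G k B : ℝ) ≤
          max (extk G k (A p) : ℝ) (extk G' k (A' p) : ℝ) ∧
        max (extk G k (A p) : ℝ) (extk G' k (A' p) : ℝ) ≤
          max (extk G k (A p) : ℝ) (extk G k (A' p) : ℝ)) := by
  have part1 : ∀ C : Finset V, extk G' k C ≤ extk G k C := by
    intro C
    have := domk_graph_mono G G' hsub k C
    unfold extk; omega
  refine ⟨part1, fun hpos B hBcard => ?_⟩
  -- notation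
  have hp0 : (0:ℝ) < p := by exact_mod_cast hp1
  set n : ℕ := Fintype.card V with hn
  have hnp : (0:ℝ) < (n:ℝ) - p := by
    have : p < n := hpn
    have : (p:ℝ) < n := by exact_mod_cast this
    linarith
  set E : ℝ := (extk G' k (A' p) : ℝ) with hE
  have hEpos : 0 < E := by rw [hE]; exact_mod_cast hpos
  set e : ℝ := Real.exp 1 with he
  have he1 : 1 < e := by
    have := Real.add_one_le_exp (1:ℝ)
    rw [← he] at this; linarith
  set x : ℝ := (extk G k B : ℝ) with hx
  have hxnn : 0 ≤ x := by
    have h1 := card_le_domk G k B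
    have h2 : (0:ℤ) ≤ extk G k B := by unfold extk; omega
    rw [hx]; exact_mod_cast h2
  have hxle : x ≤ (n:ℝ) - p := by
    have h1 := domk_le_card_univ G k B
    have h2 : extk G k B ≤ (n:ℤ) - p := by unfold extk; rw [hBcard]; omega
    rw [hx]; exact_mod_cast h2
  set L : ℝ := (extk G k (A p) : ℝ) with hL
  clear_value E e x L
  -- greedy bound: L ≥ (1 - 1/e) * (x + p) - p
  have hgreedy : (1 - 1/e) * (x + p) - p ≤ L := by
    have hmain := greedy_main G k p hp1 A hA B hBcard p le_rfl
    have hpow : (1 - 1/(p:ℝ))^p ≤ 1/e := by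
      have h1 : (1 - 1/(p:ℝ)) ≤ Real.exp (-(1/(p:ℝ))) := by
        have := Real.add_one_le_exp (-(1/(p:ℝ)))
        linarith
      have h2 : (0:ℝ) ≤ 1 - 1/(p:ℝ) := by
        rw [sub_nonneg, div_le_one hp0]; exact_mod_cast hp1
      calc (1 - 1/(p:ℝ))^p ≤ (Real.exp (-(1/(p:ℝ))))^p := pow_le_pow_left₀ h2 h1 p
        _ = Real.exp (-(1/(p:ℝ)) * p) := by rw [← Real.exp_nat_mul]; ring_nf
        _ = Real.exp (-1) := by
            congr 1
            field_simp
        _ = 1/e := by rw [he, Real.exp_neg]; ring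
    set b : ℝ := (domk G k B : ℝ) with hb
    set d : ℝ := (domk G k (A p) : ℝ) with hd
    have hbnn : 0 ≤ b := by positivity
    have h3 : b - d ≤ (1/e) * b := by
      calc b - d ≤ (1 - 1/(p:ℝ))^p * b := hmain
        _ ≤ (1/e) * b := mul_le_mul_of_nonneg_right hpow hbnn
    -- x = b - p, L = d - p (card A p = p)
    have hcard : (A p).card = p := greedy_card hA p le_rfl
    have hxb : x = b - p := by
      rw [hx, hb]; unfold extk; rw [hBcard]; push_cast; ring
    have hLd : L = d - p := by
      rw [hL, hd]; unfold extk; rw [hcard]; push_cast; ring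
    rw [hxb, hLd]
    have hepos : (0:ℝ) < e := by linarith
    nlinarith [h3]
  constructor
  · exact final_arith E e x L p n hEpos he1 hxnn hp0 hnp hxle hgreedy
  · -- second inequality
    have := part1 (A' p)
    have : (extk G' k (A' p) : ℝ) ≤ (extk G k (A' p) : ℝ) := by exact_mod_cast this
    rw [hE]
    exact max_le_max le_rfl this
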